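/- The image of the centering operator J : L⁰ × ℤ → E^m × ℤ is exactly the centred state space: Im(J) = L^m. -/

import Mathlib

open scoped BigOperators

namespace COB

/-- Vectors of queue sizes indexed by prices in `I = {−d',…,d'}` (functions `ℤ → ℕ`
vanishing outside `I`; the support condition is part of membership in `Em`). -/
abbrev VecC := ℤ → ℕ

/-- Pairs (buy side, sell side). -/
abbrev EC := VecC × VecC

/-- A vector is supported in `{−d',…,d'}`. -/
def suppIn (d' : ℕ) (Z : VecC) : Prop :=
  ∀ j : ℤ, Z j ≠ 0 → -(d' : ℤ) ≤ j ∧ j ≤ (d' : ℤ)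

/-- Price support of a vector, inside `I = {−d',…,d'}`. -/
noncomputable def suppC (d' : ℕ) (Z : VecC) : Finset ℤ :=
  (Finset.Icc (-(d' : ℤ)) (d' : ℤ)).filter fun j => 0 < Z j

/-- `sup` of a finite set of prices, with the convention `sup ∅ = −d'`. -/
def supD (d' : ℕ) (S : Finset ℤ) : ℤ := if h : S.Nonempty then S.max' h else -(d' : ℤ)

/-- `inf` of a finite set of prices, with the convention `inf ∅ = d'`. -/
def infD (d' : ℕ) (S : Finset ℤ) : ℤ := if h : S.Nonempty then S.min' h else (d' : ℤ)

/-- bid price `b(X) = sup supp(X⁺)` (convention `sup supp(0) = −d'`). -/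
noncomputable def bC (d' : ℕ) (X : EC) : ℤ := supD d' (suppC d' X.1)

/-- ask price `a(X) = inf supp(X⁻)` (convention `inf supp(0) = d'`). -/
noncomputable def aC (d' : ℕ) (X : EC) : ℤ := infD d' (suppC d' X.2)

/-- `E^m`: configurations supported in `I` with nonempty buy and sell sides. -/
def Em (d' : ℕ) : Set EC :=
  {X | suppIn d' X.1 ∧ suppIn d' X.2 ∧ X.1 ≠ 0 ∧ X.2 ≠ 0}

/-- `L⁰`: elements of `E^m` with `a(X) > b(X)`. -/
def L0 (d' : ℕ) : Set EC := {X | X ∈ Em d' ∧ bC d' X < aC d' X}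

/-- `p̂`: the parity of `p` (`0` if `p` is even, `1` if `p` is odd). -/
def hatp (p : ℤ) : ℤ := p % 2

/-- `⌈p/2⌉` for an integer `p`. -/
def ceilHalf (p : ℤ) : ℤ := Int.fdiv (p + 1) 2

/-- `[p,p'] = ⌈p'/2⌉ − ⌈p/2⌉`. -/
def shift (p p' : ℤ) : ℤ := ceilHalf p' - ceilHalf p

/-- The centred state space `L^m`. -/
def Lm (d' : ℕ) : Set (EC × ℤ) :=
  {Xp | Xp.1 ∈ Em d' ∧ bC d' Xp.1 < aC d' Xp.1 ∧
    aC d' Xp.1 + bC d' Xp.1 + hatp Xp.2 = 0}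

/-- The truncating shift `σ_i` on a single vector. -/
def sigmaV (d' : ℕ) (i : ℤ) (Y : VecC) : VecC := fun j =>
  if min (d' : ℤ) ((d' : ℤ) - i) < j ∨ j < max (-(d' : ℤ)) (-(d' : ℤ) - i) then 0
  else Y (j + i)

/-- The truncating shift `σ_i` acting componentwise on pairs. -/
def sigmaP (d' : ℕ) (i : ℤ) (Y : EC) : EC := (sigmaV d' i Y.1, sigmaV d' i Y.2)

/-- The centering operator `J(Y,p) = (σ_{[p,p']}(Y), p')`, `p' = p + a(Y) + b(Y) + p̂`. -/
noncomputable def J (d' : ℕ) (Y : EC) (p : ℤ) : EC × ℤ :=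
  (sigmaP d' (shift p (p + aC d' Y + bC d' Y + hatp p)) Y,
    p + aC d' Y + bC d' Y + hatp p)


lemma mem_suppC' {d' : ℕ} {Z : VecC} {j : ℤ} :
    j ∈ suppC d' Z ↔ (-(d':ℤ) ≤ j ∧ j ≤ (d':ℤ)) ∧ 0 < Z j := by
  simp [suppC, Finset.mem_filter, Finset.mem_Icc]

lemma suppC_nonempty' {d' : ℕ} {Z : VecC} (hs : suppIn d' Z) (hne : Z ≠ 0) :
    (suppC d' Z).Nonempty := by
  obtain ⟨j, hj⟩ : ∃ j, Z j ≠ 0 := by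
    by_contra h; push_neg at h; exact hne (funext h)
  exact ⟨j, mem_suppC'.2 ⟨hs j hj, Nat.pos_of_ne_zero hj⟩⟩

lemma bC_spec {d' : ℕ} {X : EC} (hs : suppIn d' X.1) (hne : X.1 ≠ 0) :
    (-(d':ℤ) ≤ bC d' X ∧ bC d' X ≤ (d':ℤ)) ∧ 0 < X.1 (bC d' X) ∧
      ∀ j, bC d' X < j → X.1 j = 0 := by
  have hN := suppC_nonempty' hs hne
  have hmem : bC d' X ∈ suppC d' X.1 := by
    rw [bC, supD, dif_pos hN]; exact Finset.max'_mem _ _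
  rw [mem_suppC'] at hmem
  refine ⟨hmem.1, hmem.2, ?_⟩
  intro j hj
  by_contra h
  have hjI := hs j h
  have hmem2 : j ∈ suppC d' X.1 := mem_suppC'.2 ⟨hjI, Nat.pos_of_ne_zero h⟩
  have hle := Finset.le_max' _ _ hmem2
  rw [bC, supD, dif_pos hN] at hj
  omega

lemma aC_spec {d' : ℕ} {X : EC} (hs : suppIn d' X.2) (hne : X.2 ≠ 0) :
    (-(d':ℤ) ≤ aC d' X ∧ aC d' X ≤ (d':ℤ)) ∧ 0 < X.2 (aC d' X) ∧
      ∀ j, j < aC d' X → X.2 j = 0 := by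
  have hN := suppC_nonempty' hs hne
  have hmem : aC d' X ∈ suppC d' X.2 := by
    rw [aC, infD, dif_pos hN]; exact Finset.min'_mem _ _
  rw [mem_suppC'] at hmem
  refine ⟨hmem.1, hmem.2, ?_⟩
  intro j hj
  by_contra h
  have hjI := hs j h
  have hmem2 : j ∈ suppC d' X.2 := mem_suppC'.2 ⟨hjI, Nat.pos_of_ne_zero h⟩
  have hle := Finset.min'_le _ _ hmem2
  rw [aC, infD, dif_pos hN] at hj
  omega

lemma bC_eq {d' : ℕ} {X : EC} {b : ℤ} (hb1 : -(d':ℤ) ≤ b) (hb2 : b ≤ (d':ℤ))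
    (hpos : 0 < X.1 b) (hmax : ∀ j, b < j → X.1 j = 0) : bC d' X = b := by
  have hmem : b ∈ suppC d' X.1 := mem_suppC'.2 ⟨⟨hb1, hb2⟩, hpos⟩
  have hN : (suppC d' X.1).Nonempty := ⟨b, hmem⟩
  rw [bC, supD, dif_pos hN]
  refine le_antisymm (Finset.max'_le _ _ _ ?_) (Finset.le_max' _ _ hmem)
  intro j hj
  rw [mem_suppC'] at hj
  by_contra h
  have := hmax j (by omega)
  omega

lemma aC_eq {d' : ℕ} {X : EC} {a : ℤ} (ha1 : -(d':ℤ) ≤ a) (ha2 : a ≤ (d':ℤ))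
    (hpos : 0 < X.2 a) (hmin : ∀ j, j < a → X.2 j = 0) : aC d' X = a := by
  have hmem : a ∈ suppC d' X.2 := mem_suppC'.2 ⟨⟨ha1, ha2⟩, hpos⟩
  have hN : (suppC d' X.2).Nonempty := ⟨a, hmem⟩
  rw [aC, infD, dif_pos hN]
  refine le_antisymm (Finset.min'_le _ _ hmem) (Finset.le_min' _ _ _ ?_)
  intro j hj
  rw [mem_suppC'] at hj
  by_contra h
  have := hmin j (by omega)
  omega

lemma two_ceilHalf (p : ℤ) : 2 * ceilHalf p = p + p % 2 := by
  rw [ceilHalf, Int.fdiv_eq_ediv_of_nonneg _ (by norm_num)]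
  omega

lemma sigmaV_zero {d' : ℕ} {Z : VecC} (hs : suppIn d' Z) : sigmaV d' 0 Z = Z := by
  funext j
  unfold sigmaV
  split_ifs with h
  · by_contra hne
    have := hs j (fun h0 => hne h0.symm)
    omega
  · norm_num

/-- Lemma 4.5 of Cont–Degond–Xuan: the image of the centering
operator `J : L⁰ × ℤ → E^m × ℤ` is exactly the centred state space `L^m`. -/
theorem J_image_eq_Lm (d' : ℕ) (hd' : 1 ≤ d') :
    {Z : EC × ℤ | ∃ Y : EC, ∃ p : ℤ, Y ∈ L0 d' ∧ J d' Y p = Z} = Lm d' := by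
  ext Z
  simp only [Set.mem_setOf_eq]
  constructor
  · rintro ⟨Y, p, ⟨⟨hs1, hs2, hn1, hn2⟩, hab⟩, rfl⟩
    obtain ⟨⟨hbl, hbu⟩, hbpos, hbmax⟩ := bC_spec hs1 hn1
    obtain ⟨⟨hal, hau⟩, hapos, hamin⟩ := aC_spec hs2 hn2
    set a := aC d' Y with ha
    set b := bC d' Y with hb
    set p' := p + a + b + hatp p with hp'
    set i := shift p p' with hi
    have hmod : (a + b) % 2 = 0 ∨ (a + b) % 2 = 1 := by omega
    have hi2 : 2 * i = a + b + (a + b) % 2 := by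
      have h1 := two_ceilHalf p
      have h2 := two_ceilHalf p'
      rw [hi, shift]
      unfold hatp at hp'
      omega
    -- window facts
    have hbw : ¬ (min (d':ℤ) ((d':ℤ) - i) < b - i ∨ b - i < max (-(d':ℤ)) (-(d':ℤ) - i)) := by
      omega
    have haw : ¬ (min (d':ℤ) ((d':ℤ) - i) < a - i ∨ a - i < max (-(d':ℤ)) (-(d':ℤ) - i)) := by
      omega
    have hX1 : (sigmaP d' i Y).1 (b - i) = Y.1 b := by
      show sigmaV d' i Y.1 (b - i) = Y.1 b
      rw [sigmaV, if_neg hbw, show b - i + i = b from by ring]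
    have hX2 : (sigmaP d' i Y).2 (a - i) = Y.2 a := by
      show sigmaV d' i Y.2 (a - i) = Y.2 a
      rw [sigmaV, if_neg haw, show a - i + i = a from by ring]
    have hX1max : ∀ j, b - i < j → (sigmaP d' i Y).1 j = 0 := by
      intro j hj
      show sigmaV d' i Y.1 j = 0
      rw [sigmaV]
      split_ifs with h
      · rfl
      · exact hbmax (j + i) (by omega)
    have hX2min : ∀ j, j < a - i → (sigmaP d' i Y).2 j = 0 := by
      intro j hj
      show sigmaV d' i Y.2 j = 0
      rw [sigmaV]
      split_ifs with h
      · rfl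
      · exact hamin (j + i) (by omega)
    have hbX : bC d' (sigmaP d' i Y) = b - i := bC_eq (by omega) (by omega) (by omega) hX1max
    have haX : aC d' (sigmaP d' i Y) = a - i := aC_eq (by omega) (by omega) (by omega) hX2min
    have hsX1 : suppIn d' (sigmaP d' i Y).1 := by
      intro j hj
      have : sigmaV d' i Y.1 j ≠ 0 := hj
      rw [sigmaV] at this
      split_ifs at this with h
      · exact absurd rfl this
      · omega
    have hsX2 : suppIn d' (sigmaP d' i Y).2 := by
      intro j hj
      have : sigmaV d' i Y.2 j ≠ 0 := hj
      rw [sigmaV] at this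
      split_ifs at this with h
      · exact absurd rfl this
      · omega
    have hnX1 : (sigmaP d' i Y).1 ≠ 0 := by
      intro h
      have : (sigmaP d' i Y).1 (b - i) = 0 := by rw [h]; rfl
      omega
    have hnX2 : (sigmaP d' i Y).2 ≠ 0 := by
      intro h
      have : (sigmaP d' i Y).2 (a - i) = 0 := by rw [h]; rfl
      omega
    refine ⟨⟨hsX1, hsX2, hnX1, hnX2⟩, ?_, ?_⟩
    · show bC d' (J d' Y p).1 < aC d' (J d' Y p).1
      have : (J d' Y p).1 = sigmaP d' i Y := rfl
      rw [this, hbX, haX]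
      omega
    · show aC d' (J d' Y p).1 + bC d' (J d' Y p).1 + hatp (J d' Y p).2 = 0
      have h1 : (J d' Y p).1 = sigmaP d' i Y := rfl
      have h2 : (J d' Y p).2 = p' := rfl
      rw [h1, h2, hbX, haX]
      unfold hatp at hp' ⊢
      omega
  · rintro ⟨⟨hs1, hs2, hn1, hn2⟩, hab, hsum⟩
    refine ⟨Z.1, Z.2, ⟨⟨hs1, hs2, hn1, hn2⟩, hab⟩, ?_⟩
    have hp' : Z.2 + aC d' Z.1 + bC d' Z.1 + hatp Z.2 = Z.2 := by omega
    rw [J, hp', shift, sub_self]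
    have : sigmaP d' 0 Z.1 = Z.1 := by
      unfold sigmaP
      rw [sigmaV_zero hs1, sigmaV_zero hs2]
    rw [this]


end COB
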